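/- For every complex number z = 1 + i·y with y a nonzero real number, the distance |ζ_N(z) − ζ(z)| between the N-th partial sum of the Riemann series and the analytically continued Riemann zeta value at z converges, as N → ∞, to 1/|y|. In other words, the partial sums accumulate on the circle of center ζ(z) and radius 1/|y|. -/

import Mathlib

open Filter

/-- The `N`-th partial sum of the Riemann series: `ζ_N(z) = ∑_{n=1}^{N} n^{-z}`. -/
noncomputable def zetaPartial (z : ℂ) (N : ℕ) : ℂ :=
  ∑ n ∈ Finset.Icc 1 N, (n : ℂ) ^ (-z)

section Aux
open Complex Topology

lemma hasDeriv1 {s : ℂ} (hs0 : s ≠ 0) {x : ℝ} (hx : x ≠ 0) :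
    HasDerivAt (fun y : ℝ => (y : ℂ) ^ (-s)) (-s * (x:ℂ) ^ (-s - 1)) x := by
  have hr : (-s - 1 : ℂ) ≠ -1 := by intro h; apply hs0; linear_combination -h
  have h := (hasDerivAt_ofReal_cpow_const' hx hr).const_mul (-s - 1 + 1)
  have hne : (-s - 1 + 1 : ℂ) ≠ 0 := by intro h; apply hs0; linear_combination -h
  have e : (-s - 1 + 1 : ℂ) = -s := by ring
  rw [e] at h
  refine h.congr_of_eventuallyEq (Filter.Eventually.of_forall fun y => ?_)
  show _ = -s * (_ / -s)
  rw [mul_div_cancel₀ _ (e ▸ hne)]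

lemma hasDeriv2 {s : ℂ} (hs1 : s ≠ 1) {x : ℝ} (hx : x ≠ 0) :
    HasDerivAt (fun y : ℝ => (y : ℂ) ^ (1 - s) / (1 - s)) ((x:ℂ) ^ (-s)) x := by
  have hr : (-s : ℂ) ≠ -1 := by intro h; apply hs1; linear_combination -h
  have h := hasDerivAt_ofReal_cpow_const' hx hr
  have e : (-s + 1 : ℂ) = 1 - s := by ring
  rw [e] at h
  exact h


noncomputable def gterm (n : ℕ) (s : ℂ) : ℂ :=
  (n : ℂ) ^ (-s) - (((n : ℂ) + 1) ^ (1 - s) - (n : ℂ) ^ (1 - s)) / (1 - s)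

lemma gterm_bound {n : ℕ} (hn : 1 ≤ n) {s : ℂ} (hs : 0 < s.re) (hs1 : s ≠ 1) :
    ‖gterm n s‖ ≤ ‖s‖ * (n : ℝ) ^ (-s.re - 1) := by
  have hs0 : s ≠ 0 := fun h => by simp [h] at hs
  have hn0 : (0:ℝ) < n := by exact_mod_cast hn
  have hn1 : (1:ℝ) ≤ n := by exact_mod_cast hn
  set C : ℝ := ‖s‖ * (n : ℝ) ^ (-s.re - 1) with hC
  set I : Set ℝ := Set.Icc (n : ℝ) (n + 1) with hI
  have hIconv : Convex ℝ I := convex_Icc _ _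
  have hnI : (n:ℝ) ∈ I := by constructor <;> simp [hI] <;> linarith
  have hn1I : (n:ℝ) + 1 ∈ I := by constructor <;> simp [hI]
  have hxpos : ∀ x ∈ I, (0:ℝ) < x := fun x hx => by
    rw [hI] at hx; linarith [hx.1]
  -- inner bound
  have inner : ∀ t ∈ I, ‖(t : ℂ) ^ (-s) - ((n:ℝ) : ℂ) ^ (-s)‖ ≤ C := by
    intro t ht
    have hderiv : ∀ x ∈ I, HasDerivWithinAt (fun y : ℝ => (y : ℂ) ^ (-s))
        (-s * (x:ℂ) ^ (-s - 1)) I x := fun x hx =>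
      (hasDeriv1 hs0 (hxpos x hx).ne').hasDerivWithinAt
    have bound : ∀ x ∈ I, ‖-s * (x:ℂ) ^ (-s - 1)‖ ≤ C := by
      intro x hx
      have hx0 : (0:ℝ) < x := hxpos x hx
      rw [norm_mul, norm_neg,
        Complex.norm_cpow_eq_rpow_re_of_pos hx0]
      have hre : (-s - 1).re = -s.re - 1 := by simp
      have hle : x ^ ((-s - 1).re) ≤ (n:ℝ) ^ (-s.re - 1) := by
        rw [hre]; exact Real.rpow_le_rpow_of_nonpos hn0 hx.1 (by linarith)
      exact mul_le_mul_of_nonneg_left hle (norm_nonneg s)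
    have := hIconv.norm_image_sub_le_of_norm_hasDerivWithin_le hderiv bound hnI ht
    calc ‖(t : ℂ) ^ (-s) - ((n:ℝ) : ℂ) ^ (-s)‖ ≤ C * ‖t - (n:ℝ)‖ := this
      _ ≤ C * 1 := by
          have hC0 : 0 ≤ C := by positivity
          have : ‖t - (n:ℝ)‖ ≤ 1 := by
            rw [Real.norm_eq_abs, _root_.abs_of_nonneg (by linarith [ht.1])]
            linarith [ht.2]
          exact mul_le_mul_of_nonneg_left this hC0
      _ = C := mul_one C
  -- outer MVT
  set h : ℝ → ℂ := fun t => (t:ℂ) ^ (1 - s) / (1 - s) - (t:ℂ) * ((n:ℝ):ℂ) ^ (-s) with hh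
  have hderiv : ∀ x ∈ I, HasDerivWithinAt h
      ((x:ℂ) ^ (-s) - ((n:ℝ):ℂ) ^ (-s)) I x := by
    intro x hx
    have h1 := hasDeriv2 hs1 (hxpos x hx).ne'
    have h2 : HasDerivAt (fun t : ℝ => (t:ℂ) * ((n:ℝ):ℂ) ^ (-s)) (((n:ℝ):ℂ) ^ (-s)) x := by
      simpa using (Complex.ofRealCLM.hasDerivAt (x := x)).mul_const (((n:ℝ):ℂ) ^ (-s))
    exact ((h1.sub h2)).hasDerivWithinAt
  have hmvt := hIconv.norm_image_sub_le_of_norm_hasDerivWithin_le hderiv inner hn1I hnI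
  have hval : h ((n:ℝ)) - h ((n:ℝ) + 1) = gterm n s := by
    rw [hh]
    simp only
    have e1 : (((n:ℝ) + 1 : ℝ) : ℂ) = (n:ℂ) + 1 := by push_cast; ring
    have e2 : (((n:ℝ) : ℝ) : ℂ) = (n:ℂ) := by push_cast; ring
    rw [gterm]
    push_cast
    have hne : (1 - s) ≠ 0 := by intro hc; apply hs1; linear_combination -hc
    field_simp
    ring
  calc ‖gterm n s‖ = ‖h ((n:ℝ)) - h ((n:ℝ) + 1)‖ := by rw [hval]
    _ ≤ C * ‖(n:ℝ) - ((n:ℝ) + 1)‖ := hmvt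
    _ = C := by simp

lemma summable_bound {σ : ℝ} (hσ : 0 < σ) (M : ℝ) :
    Summable (fun k : ℕ => M * ((k + 1 : ℕ) : ℝ) ^ (-σ - 1)) := by
  apply Summable.mul_left
  have : Summable (fun n : ℕ => (n : ℝ) ^ (-σ - 1)) :=
    Real.summable_nat_rpow.mpr (by linarith)
  exact (summable_nat_add_iff 1).mpr this

lemma gterm_summable {s : ℂ} (hs : 0 < s.re) (hs1 : s ≠ 1) :
    Summable (fun k : ℕ => gterm (k + 1) s) := by
  apply Summable.of_norm_bounded (g := fun k : ℕ => ‖s‖ * ((k + 1 : ℕ) : ℝ) ^ (-s.re - 1))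
    (summable_bound hs ‖s‖)
  intro k
  exact gterm_bound (Nat.le_add_left 1 k) hs hs1

noncomputable def Gfun (s : ℂ) : ℂ := ∑' k : ℕ, gterm (k + 1) s

lemma zetaPartial_eq_sum_range (s : ℂ) (N : ℕ) :
    zetaPartial s N = ∑ k ∈ Finset.range N, ((k + 1 : ℕ) : ℂ) ^ (-s) := by
  rw [zetaPartial, ← Finset.Ico_add_one_right_eq_Icc, Finset.sum_Ico_eq_sum_range]
  simp only [Nat.add_sub_cancel_left, Nat.succ_sub_one, Nat.add_sub_cancel]
  exact Finset.sum_congr rfl (fun k _ => by rw [Nat.add_comm 1 k])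

lemma sum_gterm (N : ℕ) (s : ℂ) :
    ∑ k ∈ Finset.range N, gterm (k + 1) s
      = zetaPartial s N - ((((N : ℂ) + 1)) ^ (1 - s) - 1) / (1 - s) := by
  simp only [gterm, Finset.sum_sub_distrib]
  congr 1
  · rw [zetaPartial_eq_sum_range]
    try push_cast
    try rfl
  · rw [← Finset.sum_div]
    congr 1
    have := Finset.sum_range_sub (f := fun k : ℕ => ((k : ℂ) + 1) ^ (1 - s)) N
    simp only [Nat.cast_zero, zero_add, Complex.one_cpow] at this
    push_cast at this ⊢
    rw [← this]
    try refine Finset.sum_congr rfl (fun k _ => ?_)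
    try push_cast
    try ring_nf

lemma tendsto_Npow {w : ℂ} (hw : w.re < 0) :
    Tendsto (fun N : ℕ => ((N : ℂ) + 1) ^ w) atTop (𝓝 0) := by
  rw [tendsto_zero_iff_norm_tendsto_zero]
  have hre : ∀ N : ℕ, ‖((N : ℂ) + 1) ^ w‖ = ((N : ℝ) + 1) ^ w.re := by
    intro N
    have : ((N : ℂ) + 1) = (((N : ℝ) + 1 : ℝ) : ℂ) := by push_cast; ring
    rw [this, Complex.norm_cpow_eq_rpow_re_of_pos (by positivity)]
  simp only [hre]
  have h1 : Tendsto (fun N : ℕ => (N : ℝ) + 1) atTop atTop :=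
    tendsto_atTop_add_const_right atTop 1 tendsto_natCast_atTop_atTop
  have h2 : Tendsto (fun x : ℝ => x ^ w.re) atTop (𝓝 0) := by
    have := tendsto_rpow_neg_atTop (y := -w.re) (by linarith)
    simpa using this
  exact h2.comp h1

lemma zetaPartial_tendsto {s : ℂ} (hs : 1 < s.re) :
    Tendsto (fun N : ℕ => zetaPartial s N) atTop (𝓝 (riemannZeta s)) := by
  have hz := zeta_eq_tsum_one_div_nat_add_one_cpow hs
  have hsum : Summable (fun n : ℕ => 1 / ((n : ℂ) + 1) ^ s) := by
    have h0 : Summable (fun n : ℕ => 1 / (n : ℂ) ^ s) :=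
      (Complex.summable_one_div_nat_cpow).mpr hs
    have := (summable_nat_add_iff 1).mpr h0
    refine this.congr fun n => ?_
    push_cast
    ring_nf
  have h1 := hsum.hasSum.tendsto_sum_nat
  rw [← hz] at h1
  refine h1.congr fun N => ?_
  rw [zetaPartial_eq_sum_range]
  refine Finset.sum_congr rfl fun k _ => ?_
  rw [Complex.cpow_neg, one_div]
  push_cast
  ring_nf

lemma Gfun_eq {s : ℂ} (hs : 1 < s.re) : Gfun s = riemannZeta s - 1 / (s - 1) := by
  have hs0 : 0 < s.re := by linarith
  have hs1 : s ≠ 1 := by intro h; rw [h] at hs; simp at hs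
  have hne : (1 - s) ≠ 0 := fun h => hs1 (by linear_combination -h)
  have h1 : Tendsto (fun N => ∑ k ∈ Finset.range N, gterm (k + 1) s) atTop (𝓝 (Gfun s)) :=
    (gterm_summable hs0 hs1).hasSum.tendsto_sum_nat
  have h2 : Tendsto (fun N => ∑ k ∈ Finset.range N, gterm (k + 1) s) atTop
      (𝓝 (riemannZeta s - ((0 : ℂ) - 1) / (1 - s))) := by
    simp only [sum_gterm]
    exact (zetaPartial_tendsto hs).sub
      ((Tendsto.sub_const (tendsto_Npow (by simp; linarith)) 1).div_const (1 - s))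
  have := tendsto_nhds_unique h1 h2
  rw [this]
  congr 1
  have hne2 : (s - 1) ≠ 0 := fun h => hs1 (by linear_combination h)
  rw [div_eq_div_iff hne hne2]
  ring

def Uset : Set ℂ := {s : ℂ | 0 < s.re ∧ s ≠ 1}

lemma Uopen : IsOpen Uset := by
  have : Uset = (Complex.re ⁻¹' Set.Ioi 0) ∩ {(1 : ℂ)}ᶜ := by
    ext s
    simp [Uset, Set.mem_setOf_eq]
  rw [this]
  exact (isOpen_Ioi.preimage Complex.continuous_re).inter isOpen_compl_singleton

lemma Upreconn : IsPreconnected Uset := by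
  set A1 : Set ℂ := {s : ℂ | 0 < s.re} ∩ {s : ℂ | s.re < 1} with hA1def
  set A2 : Set ℂ := {s : ℂ | 1 < s.re} with hA2def
  set A3 : Set ℂ := {s : ℂ | 0 < s.re} ∩ {s : ℂ | 0 < s.im} with hA3def
  set A4 : Set ℂ := {s : ℂ | 0 < s.re} ∩ {s : ℂ | s.im < 0} with hA4def
  have hA1 : IsPreconnected A1 :=
    ((convex_halfSpace_re_gt 0).inter (convex_halfSpace_re_lt 1)).isPreconnected
  have hA2 : IsPreconnected A2 := (convex_halfSpace_re_gt 1).isPreconnected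
  have hA3 : IsPreconnected A3 :=
    ((convex_halfSpace_re_gt 0).inter (convex_halfSpace_im_gt 0)).isPreconnected
  have hA4 : IsPreconnected A4 :=
    ((convex_halfSpace_re_gt 0).inter (convex_halfSpace_im_lt 0)).isPreconnected
  have h13 : IsPreconnected (A1 ∪ A3) := by
    refine IsPreconnected.union ((1/2 : ℂ) + (1/2 : ℂ) * Complex.I) ?_ ?_ hA1 hA3
    · constructor <;> simp <;> norm_num
    · constructor <;> simp <;> norm_num
  have h132 : IsPreconnected ((A1 ∪ A3) ∪ A2) := by
    refine IsPreconnected.union ((2 : ℂ) + Complex.I) ?_ ?_ h13 hA2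
    · right; constructor <;> simp <;> norm_num
    · show (1:ℝ) < ((2 : ℂ) + Complex.I).re
      simp
  have h1324 : IsPreconnected (((A1 ∪ A3) ∪ A2) ∪ A4) := by
    refine IsPreconnected.union ((1/2 : ℂ) - (1/2 : ℂ) * Complex.I) ?_ ?_ h132 hA4
    · left; left; constructor <;> simp <;> norm_num
    · constructor <;> simp <;> norm_num
  have hU : Uset = ((A1 ∪ A3) ∪ A2) ∪ A4 := by
    ext s
    constructor
    · rintro ⟨h0, h1⟩
      rcases lt_trichotomy s.im 0 with him | him | him
      · exact Or.inr ⟨h0, him⟩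
      · have hre : s.re ≠ 1 := by
          intro hre
          exact h1 (Complex.ext hre him)
        rcases lt_or_gt_of_ne hre with h | h
        · exact Or.inl (Or.inl (Or.inl ⟨h0, h⟩))
        · exact Or.inl (Or.inr h)
      · exact Or.inl (Or.inl (Or.inr ⟨h0, him⟩))
    · rintro ((((⟨h0, h1⟩ | ⟨h0, h1⟩) | h) | ⟨h0, h1⟩))
      · exact ⟨h0, fun hc => by rw [hc] at h1; simp at h1⟩
      · exact ⟨h0, fun hc => by rw [hc] at h1; simp at h1⟩
      · have h' : 1 < s.re := h
        exact ⟨by linarith, fun hc => by rw [hc] at h'; norm_num at h'⟩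
      · exact ⟨h0, fun hc => by rw [hc] at h1; simp at h1⟩
  rw [hU]
  exact h1324

lemma gterm_diffOn (k : ℕ) : DifferentiableOn ℂ (fun s => gterm (k + 1) s) Uset := by
  have hne : ((k + 1 : ℕ) : ℂ) ≠ 0 := Nat.cast_ne_zero.mpr (Nat.succ_ne_zero k)
  have h1 : Differentiable ℂ (fun s : ℂ => ((k + 1 : ℕ) : ℂ) ^ (-s)) :=
    differentiable_neg.const_cpow (Or.inl hne)
  have h2 : Differentiable ℂ (fun s : ℂ => (((k + 1 : ℕ) : ℂ) + 1) ^ (1 - s)) := by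
    refine Differentiable.const_cpow ?_ (Or.inl ?_)
    · exact (differentiable_const 1).sub differentiable_id
    · have e : (((k + 1 : ℕ) : ℂ) + 1) = ((k + 2 : ℕ) : ℂ) := by push_cast; ring
      rw [e]
      exact Nat.cast_ne_zero.mpr (by omega)
  have h3 : Differentiable ℂ (fun s : ℂ => ((k + 1 : ℕ) : ℂ) ^ (1 - s)) :=
    Differentiable.const_cpow ((differentiable_const 1).sub differentiable_id) (Or.inl hne)
  refine DifferentiableOn.sub h1.differentiableOn ?_
  refine DifferentiableOn.div ((h2.sub h3).differentiableOn) ?_ ?_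
  · exact ((differentiable_const 1).sub differentiable_id).differentiableOn
  · intro s hs
    exact fun hc => hs.2 (by linear_combination -hc)

lemma Gfun_diffOn : DifferentiableOn ℂ Gfun Uset := by
  have hloc : TendstoLocallyUniformlyOn
      (fun (N : ℕ) (s : ℂ) => ∑ k ∈ Finset.range N, gterm (k + 1) s) Gfun atTop Uset := by
    rw [tendstoLocallyUniformlyOn_iff_forall_isCompact Uopen]
    intro K hKU hK
    rcases K.eq_empty_or_nonempty with rfl | hKne
    · simp [tendstoUniformlyOn_empty]
    obtain ⟨a, haK, hmin⟩ := hK.exists_isMinOn hKne Complex.continuous_re.continuousOn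
    obtain ⟨b, hbK, hmax⟩ := hK.exists_isMaxOn hKne continuous_norm.continuousOn
    set ε : ℝ := a.re with hε
    have hε0 : 0 < ε := (hKU haK).1
    set M : ℝ := ‖b‖ with hM
    have := tendstoUniformlyOn_tsum_nat (f := fun k s => gterm (k + 1) s)
      (summable_bound hε0 M) (s := K) ?_
    · exact this
    intro k s hsK
    have h1 : ‖gterm (k + 1) s‖ ≤ ‖s‖ * ((k + 1 : ℕ) : ℝ) ^ (-s.re - 1) :=
      gterm_bound (Nat.le_add_left 1 k) (hKU hsK).1 (hKU hsK).2
    refine h1.trans ?_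
    have hk1 : (1:ℝ) ≤ ((k + 1 : ℕ) : ℝ) := by
      exact_mod_cast Nat.one_le_iff_ne_zero.mpr (Nat.succ_ne_zero k)
    have he : ((k + 1 : ℕ) : ℝ) ^ (-s.re - 1) ≤ ((k + 1 : ℕ) : ℝ) ^ (-ε - 1) := by
      apply Real.rpow_le_rpow_of_exponent_le hk1
      have h2 : a.re ≤ s.re := hmin hsK
      simp only [hε]
      linarith [h2]
    exact mul_le_mul (hmax hsK) he (by positivity) (by positivity)
  exact hloc.differentiableOn (Eventually.of_forall fun N =>
    DifferentiableOn.fun_sum fun k _ => gterm_diffOn k) Uopen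

lemma zeta_eq_Gfun {s : ℂ} (h0 : 0 < s.re) (h1 : s ≠ 1) :
    riemannZeta s = Gfun s + 1 / (s - 1) := by
  have hg : AnalyticOnNhd ℂ Gfun Uset := Gfun_diffOn.analyticOnNhd Uopen
  have hz : DifferentiableOn ℂ (fun s => riemannZeta s - 1 / (s - 1)) Uset := by
    intro t ht
    refine DifferentiableAt.differentiableWithinAt ?_
    refine (differentiableAt_riemannZeta ht.2).sub ?_
    refine DifferentiableAt.div (differentiableAt_const 1)
      ((differentiableAt_id.sub (differentiableAt_const 1))) (sub_ne_zero.mpr ht.2)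
  have hz' : AnalyticOnNhd ℂ (fun s => riemannZeta s - 1 / (s - 1)) Uset :=
    hz.analyticOnNhd Uopen
  have h2mem : (2 : ℂ) ∈ Uset := by
    constructor
    · simp
    · intro hc
      have := congrArg Complex.re hc
      norm_num at this
  have heq : Gfun =ᶠ[𝓝 (2 : ℂ)] fun s => riemannZeta s - 1 / (s - 1) := by
    have hopen : IsOpen {s : ℂ | 1 < s.re} := isOpen_lt continuous_const Complex.continuous_re
    have hmem : {s : ℂ | 1 < s.re} ∈ 𝓝 (2 : ℂ) := hopen.mem_nhds (by norm_num)
    filter_upwards [hmem] with t ht using Gfun_eq ht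
  have := hg.eqOn_of_preconnected_of_eventuallyEq hz' Upreconn h2mem heq ⟨h0, h1⟩
  simp only at this
  linear_combination -this

end Aux

open Complex Topology in
/-- Asymptotic circle: for `z = 1 + i·y` with `y ≠ 0`, the distance between the `N`-th
partial sum of the Riemann series and the analytically continued Riemann zeta value at `z`
converges to `1/|y|`: the partial sums accumulate on the circle of center `ζ(z)` and
radius `1/|Im z|`. -/
theorem abs_zetaPartial_sub_riemannZeta_tendsto (z : ℂ) (hx : z.re = 1) (hy : z.im ≠ 0) :
    Tendsto (fun N : ℕ => ‖zetaPartial z N - riemannZeta z‖)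
      atTop (nhds (1 / |z.im|)) := by
  have hz1 : z ≠ 1 := fun h => hy (by rw [h]; simp)
  have h0 : 0 < z.re := by rw [hx]; norm_num
  have hne : (1 - z) ≠ 0 := fun h => hz1 (by linear_combination -h)
  have hzeta := zeta_eq_Gfun h0 hz1
  set e : ℕ → ℂ := fun N => (∑ k ∈ Finset.range N, gterm (k + 1) z) - Gfun z with hedef
  set c : ℕ → ℂ := fun N => ((N : ℂ) + 1) ^ (1 - z) / (1 - z) with hcdef
  have he : Tendsto e atTop (𝓝 0) := by
    have hG : Tendsto (fun N : ℕ => ∑ k ∈ Finset.range N, gterm (k + 1) z) atTop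
        (𝓝 (Gfun z)) := (gterm_summable h0 hz1).hasSum.tendsto_sum_nat
    have := hG.sub_const (Gfun z)
    rw [sub_self] at this
    exact this
  have e1 : (1 : ℂ) / (z - 1) = -(1 / (1 - z)) := by
    rw [one_div, one_div, ← inv_neg, neg_sub]
  have key : ∀ N, zetaPartial z N - riemannZeta z = e N + c N := by
    intro N
    have hp : zetaPartial z N
        = (∑ k ∈ Finset.range N, gterm (k + 1) z) + (((N : ℂ) + 1) ^ (1 - z) - 1) / (1 - z) := by
      linear_combination (-1 : ℂ) * sum_gterm N z
    rw [hzeta, e1, hedef, hcdef]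
    simp only
    linear_combination hp
  have hcabs : ∀ N : ℕ, ‖c N‖ = 1 / |z.im| := by
    intro N
    rw [hcdef]
    simp only
    rw [norm_div]
    congr 1
    · have hcast : ((N : ℂ) + 1) = (((N : ℝ) + 1 : ℝ) : ℂ) := by push_cast; ring
      rw [hcast, Complex.norm_cpow_eq_rpow_re_of_pos (by positivity)]
      have : (1 - z).re = 0 := by simp [hx]
      rw [this, Real.rpow_zero]
    · rw [Complex.norm_def, Complex.normSq_apply]
      have h1 : (1 - z).re = 0 := by simp [hx]
      have h2 : (1 - z).im = -z.im := by simp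
      rw [h1, h2]
      simp only [mul_zero, zero_mul, neg_mul_neg, zero_add]
      exact Real.sqrt_mul_self_eq_abs z.im
  rw [tendsto_iff_dist_tendsto_zero]
  have hbound : ∀ N : ℕ, dist (‖zetaPartial z N - riemannZeta z‖) (1 / |z.im|)
      ≤ ‖e N‖ := by
    intro N
    rw [key N, Real.dist_eq, ← hcabs N]
    have h3 : ‖e N + c N‖ = ‖e N + c N‖ := rfl
    have h4 : ‖c N‖ = ‖c N‖ := rfl
    rw [h3, h4]
    have := abs_norm_sub_norm_le (e N + c N) (c N)
    simpa using this
  have heabs : Tendsto (fun N => ‖e N‖) atTop (𝓝 0) := by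
    have := tendsto_zero_iff_norm_tendsto_zero.mp he
    simpa using this
  exact squeeze_zero (fun N => dist_nonneg) hbound heabs
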